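/- For every fixed real y with 0 < y ≤ 1, the function x ↦ ℵ(x,y) is non-increasing (antitone) on the interval [0,∞). -/
import Mathlib


/-- The function ℵ(x, y). -/
noncomputable def aleph (x y : ℝ) : ℝ :=
  1 - (2 * Real.sqrt (1 - y) * x + x ^ 2) / y
    - 2 * Real.sqrt ((2 * Real.sqrt (1 - y) * x + x ^ 2) / y) * x - x ^ 2

/-- for fixed `0 < y ≤ 1`, the map `x ↦ ℵ(x, y)` is antitone on `[0, ∞)`. -/
theorem aleph_antitoneOn (y : ℝ) (hy0 : 0 < y) (hy1 : y ≤ 1) :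
    AntitoneOn (fun x => aleph x y) (Set.Ici (0 : ℝ)) := by
  intro a ha b hb hab
  simp only [Set.mem_Ici] at ha hb
  unfold aleph
  set s := Real.sqrt (1 - y) with hs
  have hs0 : 0 ≤ s := Real.sqrt_nonneg _
  have hA : 2 * s * a + a ^ 2 ≤ 2 * s * b + b ^ 2 := by nlinarith
  have hAa0 : 0 ≤ (2 * s * a + a ^ 2) / y := by positivity
  have hdiv : (2 * s * a + a ^ 2) / y ≤ (2 * s * b + b ^ 2) / y := by gcongr
  have hsq : Real.sqrt ((2 * s * a + a ^ 2) / y) ≤ Real.sqrt ((2 * s * b + b ^ 2) / y) :=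
    Real.sqrt_le_sqrt hdiv
  have hsqa0 : 0 ≤ Real.sqrt ((2 * s * a + a ^ 2) / y) := Real.sqrt_nonneg _
  have hmul : Real.sqrt ((2 * s * a + a ^ 2) / y) * a ≤
      Real.sqrt ((2 * s * b + b ^ 2) / y) * b :=
    mul_le_mul hsq hab ha (le_trans hsqa0 hsq)
  nlinarith
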